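/- The ratio of the expected number of 1s per position in a random sparse sequence tends to 1/(√5·φ): lim_{n→∞} (∑_{i=1}^{n} F_i·F_{n+1−i}) / (n·F_{n+2}) = 1/(√5·φ), where φ = (1+√5)/2. -/

import Mathlib

open Filter

section aux
open Finset Real goldenRatio

private def Sfib (n : ℕ) : ℕ := ∑ i ∈ Finset.Icc 1 n, Nat.fib i * Nat.fib (n + 1 - i)

private lemma Sfib_rec (n : ℕ) : Sfib (n+2) = Sfib (n+1) + Sfib n + Nat.fib (n+2) := by
  unfold Sfib
  rw [Finset.sum_Icc_succ_top (by omega)]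
  have h1 : ∀ i ∈ Finset.Icc 1 (n+1), Nat.fib i * Nat.fib (n + 2 + 1 - i)
      = Nat.fib i * Nat.fib (n + 1 + 1 - i) + Nat.fib i * Nat.fib (n + 1 - i) := by
    intro i hi
    simp only [Finset.mem_Icc] at hi
    have e1 : n + 2 + 1 - i = (n + 1 - i) + 2 := by omega
    have e2 : n + 1 + 1 - i = (n + 1 - i) + 1 := by omega
    rw [e1, e2, Nat.fib_add_two, Nat.mul_add]
    ring
  rw [Finset.sum_congr rfl h1, Finset.sum_add_distrib,
    Finset.sum_Icc_succ_top (a := 1) (b := n) (by omega)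
      (fun i => Nat.fib i * Nat.fib (n + 1 - i))]
  simp

private lemma Sfib_closed (n : ℕ) :
    5 * Sfib n + Nat.fib (n+1) = (n+1) * (Nat.fib n + Nat.fib (n+2)) := by
  induction n using Nat.twoStepInduction with
  | zero => simp [Sfib]
  | one => simp [Sfib]; decide
  | more n ih1 ih2 =>
    rw [Sfib_rec]
    zify at ih1 ih2 ⊢
    have f2 : (Nat.fib (n+2) : ℤ) = Nat.fib n + Nat.fib (n+1) := by
      rw [Nat.fib_add_two]; push_cast; ring
    have f3 : (Nat.fib (n+3) : ℤ) = Nat.fib (n+1) + Nat.fib (n+2) := by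
      rw [show n+3 = (n+1)+2 by ring, Nat.fib_add_two]; push_cast; ring
    have f4 : (Nat.fib (n+4) : ℤ) = Nat.fib (n+2) + Nat.fib (n+3) := by
      rw [show n+4 = (n+2)+2 by ring, Nat.fib_add_two]; push_cast; ring
    simp only [show (n+1)+1 = n+2 from rfl, show (n+1)+2 = n+3 from rfl,
      show (n+2)+1 = n+3 from rfl, show (n+2)+2 = n+4 from rfl] at ih2 ⊢
    rw [f3] at ih2
    rw [f4, f3]
    linear_combination ih1 + ih2 - (n+1) * f2

private lemma fib_ratio_tendsto :
    Tendsto (fun n : ℕ => (Nat.fib n : ℝ) / (Nat.fib (n+2) : ℝ)) atTop (nhds (1/φ^2)) := by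
  have hc : |ψ/φ| < 1 := by
    rw [abs_div, abs_of_pos goldenRatio_pos, div_lt_one goldenRatio_pos]
    have h1 : |ψ| < 1 := abs_lt.2 ⟨neg_one_lt_goldenConj, by linarith [goldenConj_neg]⟩
    linarith [one_lt_goldenRatio]
  have hcn : Tendsto (fun n : ℕ => (ψ/φ)^n) atTop (nhds 0) :=
    tendsto_pow_atTop_nhds_zero_of_abs_lt_one hc
  have hpsisq : ψ^2 < 1 := by nlinarith [goldenConj_neg, neg_one_lt_goldenConj]
  have hdpos : ∀ n : ℕ, 0 < φ^2 - ψ^2 * (ψ/φ)^n := by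
    intro n
    have h2 : |(ψ/φ)^n| ≤ 1 := by
      rw [abs_pow]; exact pow_le_one₀ (abs_nonneg _) hc.le
    have h3 : (ψ/φ)^n ≤ |(ψ/φ)^n| := le_abs_self _
    have h4 : 1 < φ := one_lt_goldenRatio
    nlinarith [sq_nonneg ψ]
  have key : ∀ n : ℕ, (Nat.fib n : ℝ) / (Nat.fib (n+2) : ℝ)
      = (1 - (ψ/φ)^n) / (φ^2 - ψ^2 * (ψ/φ)^n) := by
    intro n
    have hfib : (0:ℝ) < (Nat.fib (n+2) : ℝ) := by
      exact_mod_cast Nat.fib_pos.2 (by omega)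
    rw [div_eq_div_iff (ne_of_gt hfib) (ne_of_gt (hdpos n)), Real.coe_fib_eq,
      Real.coe_fib_eq]
    have h5 : Real.sqrt 5 ≠ 0 := by positivity
    have h6 : φ ≠ 0 := goldenRatio_ne_zero
    generalize φ = a at *
    generalize ψ = b at *
    rw [div_pow]
    have h7 : a ^ n ≠ 0 := pow_ne_zero _ h6
    field_simp
    ring
  simp only [key]
  have hden : Tendsto (fun n : ℕ => φ^2 - ψ^2*(ψ/φ)^n) atTop (nhds (φ^2)) := by
    have := hcn.const_mul (ψ^2)
    simpa using tendsto_const_nhds.sub this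
  have hnum : Tendsto (fun n : ℕ => 1 - (ψ/φ)^n) atTop (nhds 1) := by
    simpa using (tendsto_const_nhds (x := (1:ℝ))).sub hcn
  exact hnum.div hden (pow_ne_zero 2 goldenRatio_ne_zero)

end aux

section main
open Real goldenRatio

/-- The expected proportion of 1s in a random sparse sequence:
`(∑_{i=1}^{n} F_i · F_{n+1-i}) / (n · F_{n+2}) → 1/(√5 · φ)` as `n → ∞`,
where `φ = (1+√5)/2` is the golden ratio. -/
theorem tendsto_sum_fib_div :
    Tendsto
      (fun n : ℕ =>
        (∑ i ∈ Finset.Icc 1 n, (Nat.fib i * Nat.fib (n + 1 - i) : ℝ)) /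
          (n * Nat.fib (n + 2)))
      atTop (nhds (1 / (Real.sqrt 5 * ((1 + Real.sqrt 5) / 2)))) := by
  -- the auxiliary function with a known limit
  set g : ℕ → ℝ := fun n =>
    ((1 + 1/(n:ℝ)) * ((Nat.fib n : ℝ)/(Nat.fib (n+2) : ℝ) + 1)) / 5
      - ((Nat.fib (n+1) : ℝ)/(Nat.fib (n+2) : ℝ)) * (1/(n:ℝ)) / 5 with hg
  have hinv : Tendsto (fun n : ℕ => 1/(n:ℝ)) atTop (nhds 0) :=
    tendsto_one_div_atTop_nhds_zero_nat
  have hA : Tendsto (fun n : ℕ => ((1 + 1/(n:ℝ)) *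
      ((Nat.fib n : ℝ)/(Nat.fib (n+2) : ℝ) + 1)) / 5) atTop
      (nhds (((1+0) * (1/φ^2 + 1)) / 5)) :=
    (((tendsto_const_nhds (x := (1:ℝ))).add hinv).mul
      (fib_ratio_tendsto.add (tendsto_const_nhds (x := (1:ℝ))))).div_const 5
  have hB : Tendsto (fun n : ℕ =>
      ((Nat.fib (n+1) : ℝ)/(Nat.fib (n+2) : ℝ)) * (1/(n:ℝ)) / 5) atTop (nhds 0) := by
    apply squeeze_zero (g := fun n : ℕ => 1/(n:ℝ))
    · intro n
      have h1 : (0:ℝ) ≤ (Nat.fib (n+1) : ℝ)/(Nat.fib (n+2) : ℝ) := by positivity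
      have h2 : (0:ℝ) ≤ 1/(n:ℝ) := by positivity
      positivity
    · intro n
      have hfty : (Nat.fib (n+1) : ℝ) ≤ (Nat.fib (n+2) : ℝ) := by
        exact_mod_cast Nat.fib_le_fib_succ
      have hfpos : (0:ℝ) < (Nat.fib (n+2) : ℝ) := by
        exact_mod_cast Nat.fib_pos.2 (by omega)
      have h2 : (Nat.fib (n+1) : ℝ)/(Nat.fib (n+2) : ℝ) ≤ 1 :=
        (div_le_one hfpos).2 hfty
      have h3 : (0:ℝ) ≤ 1/(n:ℝ) := by positivity
      calc ((Nat.fib (n+1) : ℝ)/(Nat.fib (n+2) : ℝ)) * (1/(n:ℝ)) / 5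
          ≤ 1 * (1/(n:ℝ)) / 5 := by
            apply div_le_div_of_nonneg_right ?_ (by norm_num)
            exact mul_le_mul_of_nonneg_right h2 h3
        _ ≤ 1/(n:ℝ) := by
            rw [one_mul]
            linarith [h3]
    · exact hinv
  have hgl : Tendsto g atTop (nhds (((1+0) * (1/φ^2 + 1)) / 5 - 0)) := hA.sub hB
  have hval : ((1+0) * (1/φ^2 + 1)) / 5 - 0 = 1 / (Real.sqrt 5 * ((1 + Real.sqrt 5) / 2)) := by
    have hs : Real.sqrt 5 ^ 2 = 5 := Real.sq_sqrt (by norm_num)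
    have hspos : (0:ℝ) < Real.sqrt 5 := Real.sqrt_pos.2 (by norm_num)
    rw [goldenRatio]
    field_simp
    nlinarith [hs, hspos]
  rw [hval] at hgl
  apply hgl.congr'
  filter_upwards [eventually_ge_atTop 1] with n hn
  have hnpos : (0:ℝ) < (n:ℝ) := by exact_mod_cast hn
  have hfpos : (0:ℝ) < (Nat.fib (n+2) : ℝ) := by
    exact_mod_cast Nat.fib_pos.2 (by omega)
  have hS : (5:ℝ) * (Sfib n : ℝ) + (Nat.fib (n+1) : ℝ)
      = ((n:ℝ)+1) * ((Nat.fib n : ℝ) + (Nat.fib (n+2) : ℝ)) := by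
    exact_mod_cast Sfib_closed n
  have hsum : (∑ i ∈ Finset.Icc 1 n, (Nat.fib i * Nat.fib (n + 1 - i) : ℝ))
      = (Sfib n : ℝ) := by
    unfold Sfib; push_cast; ring
  rw [hsum]
  have e2 : g n = (((n:ℝ)+1)*((Nat.fib n : ℝ) + (Nat.fib (n+2) : ℝ))
      - (Nat.fib (n+1) : ℝ))/(5*((n:ℝ)*(Nat.fib (n+2) : ℝ))) := by
    simp only [hg]
    field_simp
  have e1 : ((n:ℝ)+1)*((Nat.fib n : ℝ) + (Nat.fib (n+2) : ℝ)) - (Nat.fib (n+1) : ℝ)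
      = 5 * (Sfib n : ℝ) := by linarith
  rw [e2, e1, mul_div_mul_left _ _ (by norm_num : (5:ℝ) ≠ 0)]
end main
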